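/- Let K be a complete discretely valued field with ring of integers 𝒪_K, uniformizer π, and perfect residue field. Let 𝒪_{K'} be a finite extension with ramification index e, so π = v·β^e in 𝒪_{K'} for a unit v and uniformizer β. Let g̃ ∈ 𝒪_{K'}[[s₁,…,s_n]] be a power series with zero constant term, h ∈ 𝒪_{K'}[[s₁,…,s_n]] with constant term h₀, and u ∈ 𝒪_K^× a unit with u ≢ h₀ modulo the maximal ideal when h₀ is a unit. If β₁,…,β_n ∈ 𝒪_{K'} satisfy val_π(β_i) > 0 for all i and g̃(β₁,…,β_n)^p + π·h(β₁,…,β_n) = u·π, then val_π(β_i) ≤ 1/p for some i. -/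

import Mathlib

/-- **Forced ramification at a well-chosen point.**
Let `𝒪'` be a discrete valuation ring with uniformizer `β`, and let `π = v·β^e` (`v` a unit,
`e ≥ 1`), so that the valuation normalized by `val_π(π) = 1` is `val_π(x) = v_β(x)/e`.
Let `u` be a unit and `h₀` an element with `u − h₀` not in the maximal ideal, and let
`b₁, …, b_n` be elements of positive valuation (`β ∣ b i`).  Suppose `G` lies in the ideal
generated by the `b i` (this is the value `g̃(b₁,…,b_n)` of a power series with zero constant
term) and `H ≡ h₀` modulo that ideal (the value `h(b₁,…,b_n)` of a power series with constant
term `h₀`).  If `G^p + π·H = u·π`, then `val_π(b i) ≤ 1/p` for some `i`; equivalently, for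
some `i` and some `m` with `p·m ≤ e`, `β^(m+1)` does not divide `b i`. -/
theorem exists_small_valuation
    (O' : Type) [CommRing O'] [IsDomain O'] [IsDiscreteValuationRing O']
    (p : ℕ) (hp : p.Prime)
    (β : O') (hβ : Irreducible β)
    (e : ℕ) (he : 1 ≤ e) (π : O') (v : O'ˣ) (hπ : π = v * β ^ e)
    (u h₀ : O') (hu : IsUnit u) (huh : ¬ β ∣ (u - h₀))
    (n : ℕ) (b : Fin n → O') (hb : ∀ i, β ∣ b i)
    (G H : O') (hG : G ∈ Ideal.span (Set.range b))
    (hH : H - h₀ ∈ Ideal.span (Set.range b))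
    (heq : G ^ p + π * H = u * π) :
    ∃ (i : Fin n) (m : ℕ), p * m ≤ e ∧ ¬ β ^ (m + 1) ∣ b i := by
  by_contra hcon
  push_neg at hcon
  set m0 := e / p with hm0
  have hpm0 : p * m0 ≤ e := by
    rw [mul_comm]; exact Nat.div_mul_le_self e p
  have hdvd : ∀ i, β ^ (m0 + 1) ∣ b i := fun i => hcon i m0 hpm0
  have hspan : ∀ x ∈ Ideal.span (Set.range b), β ∣ x := by
    intro x hx
    have hle : Ideal.span (Set.range b) ≤ Ideal.span {β} := by
      rw [Ideal.span_le]
      rintro _ ⟨i, rfl⟩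
      exact Ideal.mem_span_singleton.2 (hb i)
    exact Ideal.mem_span_singleton.1 (hle hx)
  have hGd : β ^ (m0 + 1) ∣ G := by
    have hle : Ideal.span (Set.range b) ≤ Ideal.span {β ^ (m0 + 1)} := by
      rw [Ideal.span_le]
      rintro _ ⟨i, rfl⟩
      exact Ideal.mem_span_singleton.2 (hdvd i)
    exact Ideal.mem_span_singleton.1 (hle hG)
  have hGp : β ^ (e + 1) ∣ G ^ p := by
    have h1 : (β ^ (m0 + 1)) ^ p ∣ G ^ p := pow_dvd_pow_of_dvd hGd p
    rw [← pow_mul] at h1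
    refine dvd_trans (pow_dvd_pow β ?_) h1
    have : e < (m0 + 1) * p := by
      have := (Nat.div_lt_iff_lt_mul hp.pos).1 (Nat.lt_succ_self (e / p))
      simpa [hm0] using this
    omega
  have hGeq : G ^ p = β ^ e * ((v : O') * (u - H)) := by
    have : G ^ p = π * (u - H) := by ring_nf; linear_combination heq
    rw [this, hπ]; ring
  have hcancel : β ∣ (v : O') * (u - H) := by
    rw [hGeq] at hGp
    have hβ0 : β ^ e ≠ 0 := pow_ne_zero e hβ.ne_zero
    have h2 : β ^ e * β ∣ β ^ e * ((v : O') * (u - H)) := by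
      rw [← pow_succ]; exact hGp
    exact (mul_dvd_mul_iff_left hβ0).1 h2
  have hβuH : β ∣ (u - H) := by
    exact Units.dvd_mul_left.1 hcancel
  have hβHh : β ∣ (H - h₀) := hspan _ hH
  exact huh (by simpa using dvd_add hβuH hβHh)
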